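/- If G is a dense, F_5-free 3-graph that contains a copy of the complete 3-graph K_4^3 on 4 vertices, then λ(G) ≤ 1/16. -/

import Mathlib

open Finset

/-- An `r`-graph: a finite vertex set together with a finite set of edges,
each edge being a subset of the vertex set. (Uniformity is a separate predicate.) -/
structure HyperGraph where
  verts : Finset ℕ
  edges : Finset (Finset ℕ)
  edge_sub : ∀ e ∈ edges, e ⊆ verts

namespace HyperGraph

/-- `G` is `r`-uniform: every edge has `r` vertices. -/
def IsUniform (G : HyperGraph) (r : ℕ) : Prop := ∀ e ∈ G.edges, e.card = r

def IsSubgraph (H G : HyperGraph) : Prop := H.verts ⊆ G.verts ∧ H.edges ⊆ G.edges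

def IsProperSubgraph (H G : HyperGraph) : Prop := H.IsSubgraph G ∧ H ≠ G

/-- `G` contains a subgraph isomorphic to `F` (an injective copy of `F`). -/
def HasCopy (G F : HyperGraph) : Prop :=
  ∃ f : ℕ → ℕ, Set.InjOn f ↑F.verts ∧ (∀ v ∈ F.verts, f v ∈ G.verts) ∧
    ∀ e ∈ F.edges, e.image f ∈ G.edges

/-- `G` is `F`-free: it contains no subgraph isomorphic to `F`. -/
def Free (G F : HyperGraph) : Prop := ¬ G.HasCopy F

/-- A feasible weight vector: nonnegative weights summing to 1 over the vertex set. -/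
def IsWeighting (G : HyperGraph) (w : ℕ → ℝ) : Prop :=
  (∀ i, 0 ≤ w i) ∧ ∑ i ∈ G.verts, w i = 1

/-- The Lagrangian polynomial `λ(G, w) = Σ_{e ∈ E(G)} Π_{i ∈ e} w i`. -/
def lagrangianAt (G : HyperGraph) (w : ℕ → ℝ) : ℝ := ∑ e ∈ G.edges, ∏ i ∈ e, w i

/-- The Lagrangian `λ(G)`: the maximum of `λ(G, w)` over feasible weight vectors. -/
noncomputable def lagrangian (G : HyperGraph) : ℝ :=
  sSup {x : ℝ | ∃ w : ℕ → ℝ, G.IsWeighting w ∧ x = G.lagrangianAt w}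

/-- `G` is dense: every proper subgraph has strictly smaller Lagrangian. -/
def IsDense (G : HyperGraph) : Prop :=
  ∀ H : HyperGraph, H.IsProperSubgraph G → H.lagrangian < G.lagrangian

/-- The Lagrangian density `π_λ(F) = sup { r! · λ(G) : G an F-free r-graph }`. -/
noncomputable def lagrangianDensity (r : ℕ) (F : HyperGraph) : ℝ :=
  sSup {x : ℝ | ∃ G : HyperGraph, G.IsUniform r ∧ G.Free F ∧
    x = (r.factorial : ℝ) * G.lagrangian}

/-- The subgraph of `G` induced by `A`. -/
def induce (G : HyperGraph) (A : Finset ℕ) : HyperGraph where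
  verts := A
  edges := G.edges.filter (fun e => e ⊆ A)
  edge_sub := fun _ he => (Finset.mem_filter.mp he).2

/-- The link `N(a,b) = { c : {a,b,c} ∈ E(G) }`. -/
def link2 (G : HyperGraph) (a b : ℕ) : Set ℕ := {c | ({a, b, c} : Finset ℕ) ∈ G.edges}

/-- `{a, b}` is a good pair to `A`. -/
def IsGoodPair (G : HyperGraph) (A : Finset ℕ) (a b : ℕ) : Prop :=
  a ≠ b ∧ a ∈ G.verts ∧ b ∈ G.verts ∧ a ∉ A ∧ b ∉ A ∧
    ∀ k ∈ A, G.link2 a k = {b} ∧ G.link2 b k = {a}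

/-- The pairs `{a 1, b 1}, …, {a s, b s}` are good pairs to `A`
partitioning `V(G) ∖ A`. -/
def GoodPartition (G : HyperGraph) (A : Finset ℕ) (s : ℕ) (a b : ℕ → ℕ) : Prop :=
  A ⊆ G.verts ∧
  (∀ v, v ∈ G.verts \ A ↔ ∃ i ∈ Finset.Icc 1 s, v = a i ∨ v = b i) ∧
  (∀ i ∈ Finset.Icc 1 s, ∀ j ∈ Finset.Icc 1 s, i ≠ j →
    ({a i, b i} : Finset ℕ) ∩ {a j, b j} = ∅) ∧
  (∀ i ∈ Finset.Icc 1 s, G.IsGoodPair A (a i) (b i))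

/-- `G` is a good graph to `A`. -/
def IsGoodGraph (G : HyperGraph) (A : Finset ℕ) : Prop := ∃ s a b, G.GoodPartition A s a b

end HyperGraph

open HyperGraph

/-- The complete `r`-graph `K_t^r` on `t` vertices. -/
def completeHyperGraph (t r : ℕ) : HyperGraph where
  verts := Finset.Icc 1 t
  edges := (Finset.Icc 1 t).powersetCard r
  edge_sub := fun _ he => (Finset.mem_powersetCard.mp he).1

/-- `K_t^{3-}`: the complete 3-graph on `t` vertices with one edge removed. -/
def completeMinus (t : ℕ) : HyperGraph where
  verts := Finset.Icc 1 t
  edges := ((Finset.Icc 1 t).powersetCard 3).filter (fun e => e ≠ ({1,2,3} : Finset ℕ))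
  edge_sub := fun _ he => (Finset.mem_powersetCard.mp (Finset.mem_filter.mp he).1).1

/-- The generalized triangle `F_5 = {123, 124, 345}`. -/
def F5 : HyperGraph where
  verts := {1,2,3,4,5}
  edges := {{1,2,3},{1,2,4},{3,4,5}}
  edge_sub := by decide

/-- The 3-uniform linear cycle of length 3: `C_3^3 = {123, 345, 561}`. -/
def C33 : HyperGraph where
  verts := {1,2,3,4,5,6}
  edges := {{1,2,3},{3,4,5},{5,6,1}}
  edge_sub := by decide

open scoped Classical in
/-- The 3-uniform linear cycle `C_t^3` of length `t`, with vertex set `[2t]` and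
edges `{123, 345, …, (2t-3)(2t-2)(2t-1), (2t-1)(2t)1}`. -/
noncomputable def linearCycle (t : ℕ) : HyperGraph where
  verts := Finset.Icc 1 (2*t)
  edges := ((Finset.Icc 1 (2*t)).powersetCard 3).filter
    (fun e => (∃ k < t - 1, e = ({2*k+1, 2*k+2, 2*k+3} : Finset ℕ)) ∨
      e = ({2*t-1, 2*t, 1} : Finset ℕ))
  edge_sub := fun _ he => (Finset.mem_powersetCard.mp (Finset.mem_filter.mp he).1).1

/-- The 3-graph `S_{2,t}` with vertex set `[t+2]` and edges `{12k : 3 ≤ k ≤ t+2}`. -/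
def S2 (t : ℕ) : HyperGraph where
  verts := Finset.Icc 1 (t+2)
  edges := (Finset.Icc 3 (t+2)).image (fun k => ({1,2,k} : Finset ℕ))
  edge_sub := by
    intro e he
    simp only [Finset.mem_image] at he
    obtain ⟨k, hk, rfl⟩ := he
    simp only [Finset.mem_Icc] at hk
    intro x hx
    simp only [Finset.mem_insert, Finset.mem_singleton] at hx
    simp only [Finset.mem_Icc]
    rcases hx with rfl | rfl | rfl <;> omega

/-- `F` is (up to relabeling) the disjoint union `G ⊔ H`. -/
def IsDisjointUnion (F G H : HyperGraph) : Prop :=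
  ∃ f g : ℕ → ℕ, Set.InjOn f ↑G.verts ∧ Set.InjOn g ↑H.verts ∧
    Disjoint (G.verts.image f) (H.verts.image g) ∧
    F.verts = G.verts.image f ∪ H.verts.image g ∧
    F.edges = G.edges.image (fun e => e.image f) ∪ H.edges.image (fun e => e.image g)

/-- An `r`-graph `H` on `t` vertices is perfect if `π_λ(H) = r! · λ(K_{t-1}^r)`. -/
def IsPerfect (r : ℕ) (H : HyperGraph) : Prop :=
  lagrangianDensity r H =
    (r.factorial : ℝ) * (completeHyperGraph (H.verts.card - 1) r).lagrangian

/-- The Turán number `ex(n, F)` for `r`-graphs on `n` vertices. -/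
noncomputable def exNum (n r : ℕ) (F : HyperGraph) : ℕ :=
  sSup {m : ℕ | ∃ G : HyperGraph, G.IsUniform r ∧ G.verts.card = n ∧ G.Free F ∧
    m = G.edges.card}

/-- The defining property of an edge of `O_s`. -/
def OsPred (s : ℕ) (e : Finset ℕ) : Prop :=
  ∃ i ∈ Finset.Icc 1 s, ∃ j ∈ Finset.Icc 1 s, i ≠ j ∧
    (e = ({2*i-1, 2*i, 2*j-1} : Finset ℕ) ∨ e = ({2*i-1, 2*i, 2*j} : Finset ℕ))

instance (s : ℕ) : DecidablePred (OsPred s) := fun e => by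
  unfold OsPred; infer_instance

/-- The 3-graph `O_s` on vertices `a_i = 2i-1`, `b_i = 2i` (`1 ≤ i ≤ s`) with edges
`a_i b_i a_j` and `a_i b_i b_j` for `i ≠ j`. -/
def Os (s : ℕ) : HyperGraph where
  verts := Finset.Icc 1 (2*s)
  edges := ((Finset.Icc 1 (2*s)).powersetCard 3).filter (OsPred s)
  edge_sub := fun _ he => (Finset.mem_powersetCard.mp (Finset.mem_filter.mp he).1).1

/-- `s = ⌈r^{r-1} / (2 (r-1)!)⌉`. -/
def sVal (r : ℕ) : ℕ := ⌈(r : ℚ)^(r-1) / (2 * ((r-1).factorial : ℚ))⌉₊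

/-- The vertex `a_i`, realized as the natural number `r - 2 + i`. -/
def aVert (r i : ℕ) : ℕ := r - 2 + i

/-- The vertex `m_j`: a fresh vertex distinct from `1, …, r-2, a_1, a_2, a_3`. -/
def mVert (r j : ℕ) : ℕ := r + 1 + j

/-- The edge `e_j = {1, 2, …, r-2, a_1, a_{j+1}}`. -/
def eEdge (r j : ℕ) : Finset ℕ := Finset.Icc 1 (r-2) ∪ {aVert r 1, aVert r (j+1)}

/-- The edge `{a_2, a_3, 1, …, i, m_1, …, m_{r-i-2}}` (for `i = 0` this is
`{a_2, a_3, m_1, …, m_{r-2}}`). -/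
def thirdEdge (r i : ℕ) : Finset ℕ :=
  {aVert r 2, aVert r 3} ∪ Finset.Icc 1 i ∪ (Finset.Icc 1 (r - i - 2)).image (mVert r)

/-- The `r`-graph `F_i^r` with edges `e_1`, `e_2` and the third edge above. -/
def Fgraph (r i : ℕ) : HyperGraph where
  verts := eEdge r 1 ∪ eEdge r 2 ∪ thirdEdge r i
  edges := {eEdge r 1, eEdge r 2, thirdEdge r i}
  edge_sub := by
    intro e he
    simp only [Finset.mem_insert, Finset.mem_singleton] at he
    rcases he with rfl | rfl | rfl
    · exact Finset.subset_union_left.trans Finset.subset_union_left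
    · exact Finset.subset_union_right.trans Finset.subset_union_left
    · exact Finset.subset_union_right


namespace F5Aux
open HyperGraph

/-- The set of Lagrangian values of `G`. -/
def lagSet (G : HyperGraph) : Set ℝ :=
  {x : ℝ | ∃ w : ℕ → ℝ, G.IsWeighting w ∧ x = G.lagrangianAt w}

lemma lagrangian_eq_sSup (G : HyperGraph) : G.lagrangian = sSup (lagSet G) := rfl

lemma weight_le_one {G : HyperGraph} {w : ℕ → ℝ} (hw : G.IsWeighting w) {i : ℕ}
    (hi : i ∈ G.verts) : w i ≤ 1 := by
  have h := Finset.single_le_sum (f := w) (fun j _ => hw.1 j) hi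
  rw [hw.2] at h
  exact h

lemma lagrangianAt_nonneg (G : HyperGraph) {w : ℕ → ℝ} (hw : ∀ i, 0 ≤ w i) :
    0 ≤ G.lagrangianAt w :=
  Finset.sum_nonneg fun _ _ => Finset.prod_nonneg fun i _ => hw i

lemma lagrangianAt_le_card {G : HyperGraph} {w : ℕ → ℝ} (hw : G.IsWeighting w) :
    G.lagrangianAt w ≤ (G.edges.card : ℝ) := by
  unfold HyperGraph.lagrangianAt
  calc ∑ e ∈ G.edges, ∏ i ∈ e, w i ≤ ∑ _e ∈ G.edges, (1:ℝ) := by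
        refine Finset.sum_le_sum fun e he => Finset.prod_le_one
          (fun i _ => hw.1 i) (fun i hi => weight_le_one hw (G.edge_sub e he hi))
    _ = (G.edges.card : ℝ) := by simp

lemma bddAbove_lagSet (G : HyperGraph) : BddAbove (lagSet G) := by
  refine ⟨(G.edges.card : ℝ), ?_⟩
  rintro x ⟨w, hw, rfl⟩
  exact lagrangianAt_le_card hw

end F5Aux
namespace F5Aux
open HyperGraph

/-- The compact search space: weightings supported inside `G.verts`. -/
def K (G : HyperGraph) : Set (ℕ → ℝ) :=
  {w | (∀ i, w i ∈ Set.Icc (0:ℝ) 1) ∧ (∀ i ∉ G.verts, w i = 0) ∧ ∑ i ∈ G.verts, w i = 1}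

lemma isCompact_K (G : HyperGraph) : IsCompact (K G) := by
  have h1 : IsCompact (Set.pi Set.univ fun _ : ℕ => Set.Icc (0:ℝ) 1) :=
    isCompact_univ_pi fun _ => isCompact_Icc
  refine h1.of_isClosed_subset ?_ ?_
  · have c1 : IsClosed (Set.pi Set.univ fun _ : ℕ => Set.Icc (0:ℝ) 1) :=
      isClosed_set_pi fun _ _ => isClosed_Icc
    have c2 : IsClosed {w : ℕ → ℝ | ∀ i ∉ G.verts, w i = 0} := by
      have h : {w : ℕ → ℝ | ∀ i ∉ G.verts, w i = 0} =
          ⋂ (i : ℕ) (_ : i ∉ G.verts), {w : ℕ → ℝ | w i = 0} := by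
        ext w; simp
      rw [h]
      exact isClosed_iInter fun i => isClosed_iInter fun _ =>
        isClosed_eq (continuous_apply i) continuous_const
    have c3 : IsClosed {w : ℕ → ℝ | ∑ i ∈ G.verts, w i = 1} :=
      isClosed_eq (continuous_finset_sum _ fun i _ => continuous_apply i) continuous_const
    have h : K G = (Set.pi Set.univ fun _ : ℕ => Set.Icc (0:ℝ) 1) ∩
        ({w : ℕ → ℝ | ∀ i ∉ G.verts, w i = 0} ∩ {w : ℕ → ℝ | ∑ i ∈ G.verts, w i = 1}) := by
      ext w
      constructor
      · rintro ⟨a, b, c⟩; exact ⟨fun i _ => a i, b, c⟩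
      · rintro ⟨a, b, c⟩; exact ⟨fun i => a i (Set.mem_univ i), b, c⟩
    rw [h]; exact c1.inter (c2.inter c3)
  · rintro w ⟨a, _, _⟩ i _
    exact a i

lemma K_nonempty {G : HyperGraph} (h : G.verts.Nonempty) : (K G).Nonempty := by
  have hc : 0 < (G.verts.card : ℝ) := by
    exact_mod_cast Finset.card_pos.2 h
  refine ⟨fun i => if i ∈ G.verts then (G.verts.card : ℝ)⁻¹ else 0, fun i => ?_, fun i hi => ?_, ?_⟩
  · by_cases hi : i ∈ G.verts
    · simp only [if_pos hi]
      constructor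
      · positivity
      · rw [inv_le_one_iff₀]
        right
        exact_mod_cast Finset.card_pos.2 h
    · simp [if_neg hi]
  · simp [if_neg hi]
  · rw [Finset.sum_congr rfl (fun i hi => if_pos hi), Finset.sum_const, nsmul_eq_mul,
      mul_inv_cancel₀ (ne_of_gt hc)]

lemma continuous_lagrangianAt (G : HyperGraph) :
    Continuous (fun w : ℕ → ℝ => G.lagrangianAt w) :=
  continuous_finset_sum _ fun e _ => continuous_finset_prod _ fun i _ => continuous_apply i

lemma exists_opt {G : HyperGraph} (h : G.verts.Nonempty) :
    ∃ w, w ∈ K G ∧ G.IsWeighting w ∧ G.lagrangian = G.lagrangianAt w ∧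
      IsMaxOn (fun w => G.lagrangianAt w) (K G) w := by
  obtain ⟨w₀, hw₀K, hmax⟩ := (isCompact_K G).exists_isMaxOn (K_nonempty h)
    (continuous_lagrangianAt G).continuousOn
  have hW : G.IsWeighting w₀ := ⟨fun i => (hw₀K.1 i).1, hw₀K.2.2⟩
  refine ⟨w₀, hw₀K, hW, le_antisymm ?_ ?_, hmax⟩
  · refine Real.sSup_le ?_ (lagrangianAt_nonneg G hW.1)
    rintro x ⟨w, hw, rfl⟩
    have hw'K : (fun i => if i ∈ G.verts then w i else 0) ∈ K G := by
      refine ⟨fun i => ?_, fun i hi => if_neg hi, ?_⟩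
      · by_cases hi : i ∈ G.verts
        · simp only [if_pos hi]
          exact ⟨hw.1 i, weight_le_one hw hi⟩
        · simp [if_neg hi]
      · rw [Finset.sum_congr rfl (fun i hi => if_pos hi)]
        exact hw.2
    have heq : G.lagrangianAt w = G.lagrangianAt (fun i => if i ∈ G.verts then w i else 0) := by
      unfold HyperGraph.lagrangianAt
      refine Finset.sum_congr rfl fun e he => Finset.prod_congr rfl fun i hi => ?_
      simp only [if_pos (G.edge_sub e he hi)]
    rw [heq]
    exact hmax hw'K
  · exact le_csSup (bddAbove_lagSet G) ⟨w₀, hW, rfl⟩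

end F5Aux
namespace F5Aux
open HyperGraph

lemma pos_of_opt {G : HyperGraph} (hd : G.IsDense) {w : ℕ → ℝ} (hw : G.IsWeighting w)
    (hopt : G.lagrangian = G.lagrangianAt w) {v : ℕ} (hv : v ∈ G.verts) : 0 < w v := by
  rcases (hw.1 v).lt_or_eq with h | h
  · exact h
  exfalso
  set H : HyperGraph := G.induce (G.verts.erase v) with hH
  have hprop : H.IsProperSubgraph G := by
    refine ⟨⟨Finset.erase_subset _ _, Finset.filter_subset _ _⟩, ?_⟩
    intro hEq
    have := congrArg HyperGraph.verts hEq
    simp only [hH, HyperGraph.induce] at this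
    rw [← this] at hv
    simp at hv
  have hWH : H.IsWeighting w := by
    refine ⟨hw.1, ?_⟩
    simp only [hH, HyperGraph.induce]
    have h2 := Finset.sum_erase_add G.verts w hv
    rw [hw.2] at h2
    linarith
  have hAt : H.lagrangianAt w = G.lagrangianAt w := by
    unfold HyperGraph.lagrangianAt
    simp only [hH, HyperGraph.induce]
    refine Finset.sum_subset (Finset.filter_subset _ _) fun e he hne => ?_
    have : ¬ e ⊆ G.verts.erase v := by
      intro hsub
      exact hne (Finset.mem_filter.2 ⟨he, hsub⟩)
    obtain ⟨i, hie, hinot⟩ := Finset.not_subset.1 this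
    have hiv : i = v := by
      have := G.edge_sub e he hie
      by_contra hne'
      exact hinot (Finset.mem_erase.2 ⟨hne', this⟩)
    exact Finset.prod_eq_zero hie (by rw [hiv]; exact h.symm)
  have hle : G.lagrangian ≤ H.lagrangian := by
    refine le_csSup (bddAbove_lagSet H) ?_
    exact ⟨w, hWH, by rw [hopt, hAt]⟩
  exact absurd (hd H hprop) (not_lt.2 hle)

/-- Partial derivative of the Lagrangian polynomial at vertex `u`. -/
noncomputable def Dp (G : HyperGraph) (w : ℕ → ℝ) (u : ℕ) : ℝ :=
  ∑ e ∈ G.edges.filter (fun e => u ∈ e), ∏ i ∈ e.erase u, w i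

end F5Aux
namespace F5Aux
open HyperGraph

lemma lag_perturb (G : HyperGraph) (w : ℕ → ℝ) {u v : ℕ} (huv : u ≠ v) (t : ℝ) :
    G.lagrangianAt (fun i => w i + (if i = u then t else 0) - (if i = v then t else 0)) =
      G.lagrangianAt w + t * (Dp G w u - Dp G w v)
        - t^2 * ∑ e ∈ G.edges.filter (fun e => u ∈ e ∧ v ∈ e), ∏ i ∈ (e.erase u).erase v, w i := by
  classical
  set wt : ℕ → ℝ := fun i => w i + (if i = u then t else 0) - (if i = v then t else 0) with hwt
  have hwtu : wt u = w u + t := by simp [hwt, huv]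
  have hwtv : wt v = w v - t := by simp [hwt, Ne.symm huv]
  have hwto : ∀ i, i ≠ u → i ≠ v → wt i = w i := by
    intro i h1 h2; simp [hwt, h1, h2]
  have key : ∀ e ∈ G.edges, ∏ i ∈ e, wt i =
      ∏ i ∈ e, w i
      + t * (if u ∈ e then ∏ i ∈ e.erase u, w i else 0)
      - t * (if v ∈ e then ∏ i ∈ e.erase v, w i else 0)
      - t^2 * (if u ∈ e ∧ v ∈ e then ∏ i ∈ (e.erase u).erase v, w i else 0) := by
    intro e _
    by_cases hu : u ∈ e <;> by_cases hv : v ∈ e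
    · -- both
      have hveu : v ∈ e.erase u := Finset.mem_erase.2 ⟨Ne.symm huv, hv⟩
      have huev : u ∈ e.erase v := Finset.mem_erase.2 ⟨huv, hu⟩
      have hQ : ∏ i ∈ (e.erase u).erase v, wt i = ∏ i ∈ (e.erase u).erase v, w i := by
        refine Finset.prod_congr rfl fun i hi => ?_
        have h2 := Finset.mem_erase.1 hi
        have h1 := Finset.mem_erase.1 h2.2
        exact hwto i h1.1 h2.1
      have e1 : ∏ i ∈ e, wt i = wt u * (wt v * ∏ i ∈ (e.erase u).erase v, wt i) := by
        rw [Finset.mul_prod_erase _ _ hveu, Finset.mul_prod_erase _ _ hu]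
      have e2 : ∏ i ∈ e, w i = w u * (w v * ∏ i ∈ (e.erase u).erase v, w i) := by
        rw [Finset.mul_prod_erase _ _ hveu, Finset.mul_prod_erase _ _ hu]
      have e3 : ∏ i ∈ e.erase u, w i = w v * ∏ i ∈ (e.erase u).erase v, w i :=
        (Finset.mul_prod_erase _ _ hveu).symm
      have e4 : ∏ i ∈ e.erase v, w i = w u * ∏ i ∈ (e.erase u).erase v, w i := by
        rw [Finset.erase_right_comm]
        exact (Finset.mul_prod_erase _ _ huev).symm
      rw [if_pos hu, if_pos hv, if_pos ⟨hu, hv⟩, e1, hQ, hwtu, hwtv, e2, e3, e4]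
      ring
    · -- u only
      have hQ : ∏ i ∈ e.erase u, wt i = ∏ i ∈ e.erase u, w i := by
        refine Finset.prod_congr rfl fun i hi => ?_
        have h1 := Finset.mem_erase.1 hi
        exact hwto i h1.1 (by rintro rfl; exact hv h1.2)
      have e1 : ∏ i ∈ e, wt i = wt u * ∏ i ∈ e.erase u, wt i :=
        (Finset.mul_prod_erase _ _ hu).symm
      have e2 : ∏ i ∈ e, w i = w u * ∏ i ∈ e.erase u, w i :=
        (Finset.mul_prod_erase _ _ hu).symm
      rw [if_pos hu, if_neg hv, if_neg (by tauto), e1, hQ, hwtu, e2]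
      ring
    · -- v only
      have hQ : ∏ i ∈ e.erase v, wt i = ∏ i ∈ e.erase v, w i := by
        refine Finset.prod_congr rfl fun i hi => ?_
        have h1 := Finset.mem_erase.1 hi
        exact hwto i (by rintro rfl; exact hu h1.2) h1.1
      have e1 : ∏ i ∈ e, wt i = wt v * ∏ i ∈ e.erase v, wt i :=
        (Finset.mul_prod_erase _ _ hv).symm
      have e2 : ∏ i ∈ e, w i = w v * ∏ i ∈ e.erase v, w i :=
        (Finset.mul_prod_erase _ _ hv).symm
      rw [if_neg hu, if_pos hv, if_neg (by tauto), e1, hQ, hwtv, e2]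
      ring
    · -- neither
      have hQ : ∏ i ∈ e, wt i = ∏ i ∈ e, w i := by
        refine Finset.prod_congr rfl fun i hi => ?_
        exact hwto i (by rintro rfl; exact hu hi) (by rintro rfl; exact hv hi)
      rw [if_neg hu, if_neg hv, if_neg (by tauto), hQ]
      ring
  unfold HyperGraph.lagrangianAt Dp
  rw [Finset.sum_congr rfl key]
  rw [Finset.sum_sub_distrib, Finset.sum_sub_distrib, Finset.sum_add_distrib,
    ← Finset.mul_sum, ← Finset.mul_sum, ← Finset.mul_sum,
    ← Finset.sum_filter, ← Finset.sum_filter, ← Finset.sum_filter]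
  ring

lemma euler {G : HyperGraph} (h3 : G.IsUniform 3) (w : ℕ → ℝ) :
    ∑ u ∈ G.verts, w u * Dp G w u = 3 * G.lagrangianAt w := by
  classical
  unfold Dp HyperGraph.lagrangianAt
  have step1 : ∀ u, w u * ∑ e ∈ G.edges.filter (fun e => u ∈ e), ∏ i ∈ e.erase u, w i
      = ∑ e ∈ G.edges, (if u ∈ e then w u * ∏ i ∈ e.erase u, w i else 0) := by
    intro u
    rw [Finset.mul_sum, Finset.sum_filter]
  rw [Finset.sum_congr rfl fun u _ => step1 u, Finset.sum_comm]
  rw [Finset.mul_sum]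
  refine Finset.sum_congr rfl fun e he => ?_
  have hsub : e ⊆ G.verts := G.edge_sub e he
  rw [Finset.sum_ite_mem, Finset.inter_eq_right.2 hsub]
  have : ∀ u ∈ e, w u * ∏ i ∈ e.erase u, w i = ∏ i ∈ e, w i := fun u hu =>
    Finset.mul_prod_erase _ _ hu
  rw [Finset.sum_congr rfl this, Finset.sum_const, h3 e he]
  push_cast
  ring

lemma Dp_le {G : HyperGraph} {w : ℕ → ℝ}
    (hmax : IsMaxOn (fun w => G.lagrangianAt w) (K G) w) (hwK : w ∈ K G)
    {u v : ℕ} (huv : u ≠ v) (hu : u ∈ G.verts) (hv : v ∈ G.verts)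
    (hpv : 0 < w v) (hwnn : ∀ i, 0 ≤ w i) : Dp G w u ≤ Dp G w v := by
  classical
  set P : ℝ := ∑ e ∈ G.edges.filter (fun e => u ∈ e ∧ v ∈ e), ∏ i ∈ (e.erase u).erase v, w i
    with hP
  have hPnn : 0 ≤ P := Finset.sum_nonneg fun e _ => Finset.prod_nonneg fun i _ => hwnn i
  have hstep : ∀ t : ℝ, 0 < t → t ≤ w v → Dp G w u - Dp G w v ≤ t * P := by
    intro t ht htv
    set wt : ℕ → ℝ := fun i => w i + (if i = u then t else 0) - (if i = v then t else 0)
      with hwt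
    have hsum : ∑ i ∈ G.verts, wt i = 1 := by
      simp only [hwt]
      rw [Finset.sum_sub_distrib, Finset.sum_add_distrib]
      rw [Finset.sum_ite_eq' G.verts u (fun _ => t), Finset.sum_ite_eq' G.verts v (fun _ => t)]
      rw [if_pos hu, if_pos hv, hwK.2.2]
      ring
    have hnn : ∀ i, 0 ≤ wt i := by
      intro i
      by_cases hiu : i = u
      · subst hiu
        simp [hwt, huv]
        have := hwnn i
        linarith
      by_cases hiv : i = v
      · subst hiv
        simp [hwt, Ne.symm huv]
        linarith
      · simp only [hwt, if_neg hiu, if_neg hiv]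
        have := hwnn i
        linarith
    have hzero : ∀ i ∉ G.verts, wt i = 0 := by
      intro i hi
      have h1 : i ≠ u := by rintro rfl; exact hi hu
      have h2 : i ≠ v := by rintro rfl; exact hi hv
      simp only [hwt, if_neg h1, if_neg h2]
      rw [hwK.2.1 i hi]; ring
    have hwtK : wt ∈ K G := by
      refine ⟨fun i => ⟨hnn i, ?_⟩, hzero, hsum⟩
      by_cases hi : i ∈ G.verts
      · have := Finset.single_le_sum (f := wt) (fun j _ => hnn j) hi
        rw [hsum] at this
        exact this
      · rw [hzero i hi]; norm_num
    have hle := hmax hwtK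
    simp only [Set.mem_setOf_eq] at hle
    rw [hwt, lag_perturb G w huv t] at hle
    nlinarith
  by_contra hcon
  push_neg at hcon
  set d : ℝ := Dp G w u - Dp G w v with hd
  have hdpos : 0 < d := by simp only [hd]; linarith
  have ht1 : 0 < min (w v) (d / (2 * (P + 1))) := by
    apply lt_min hpv
    positivity
  have := hstep _ ht1 (min_le_left _ _)
  have hle2 : min (w v) (d / (2 * (P + 1))) * P ≤ d / (2 * (P + 1)) * P :=
    mul_le_mul_of_nonneg_right (min_le_right _ _) hPnn
  have hle3 : d / (2 * (P + 1)) * P ≤ d / 2 := by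
    rw [div_mul_eq_mul_div, div_le_div_iff₀ (by positivity) (by norm_num)]
    nlinarith
  linarith
end F5Aux
namespace F5Aux
open HyperGraph

lemma sum_pairs_le {w : ℕ → ℝ} (hw : ∀ i, 0 ≤ w i) (B : Finset ℕ) :
    ∑ p ∈ B.powersetCard 2, ∏ i ∈ p, w i ≤ (∑ i ∈ B, w i)^2 / 2 := by
  classical
  induction B using Finset.induction_on with
  | empty =>
    rw [show (∅ : Finset ℕ).powersetCard 2 = ∅ by decide]
    simp
  | insert a s ha ih =>
    rw [Finset.powersetCard_succ_insert ha 1]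
    have hdisj : Disjoint (s.powersetCard 2) ((s.powersetCard 1).image (insert a)) := by
      rw [Finset.disjoint_right]
      intro p hp hp2
      obtain ⟨q, hq, rfl⟩ := Finset.mem_image.1 hp
      have : insert a q ⊆ s := (Finset.mem_powersetCard.1 hp2).1
      exact ha (this (Finset.mem_insert_self a q))
    rw [Finset.sum_union hdisj]
    have hinj : ∀ p ∈ s.powersetCard 1, ∀ q ∈ s.powersetCard 1,
        insert a p = insert a q → p = q := by
      intro p hp q hq hpq
      have hap : a ∉ p := fun h => ha ((Finset.mem_powersetCard.1 hp).1 h)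
      have haq : a ∉ q := fun h => ha ((Finset.mem_powersetCard.1 hq).1 h)
      rw [← Finset.erase_insert hap, ← Finset.erase_insert haq, hpq]
    rw [Finset.sum_image hinj]
    have hprod : ∀ p ∈ s.powersetCard 1, ∏ i ∈ insert a p, w i = w a * ∏ i ∈ p, w i := by
      intro p hp
      exact Finset.prod_insert (fun h => ha ((Finset.mem_powersetCard.1 hp).1 h))
    rw [Finset.sum_congr rfl hprod, ← Finset.mul_sum]
    have hone : ∑ p ∈ s.powersetCard 1, ∏ i ∈ p, w i = ∑ i ∈ s, w i := by
      rw [Finset.powersetCard_one, Finset.sum_map]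
      simp
    rw [hone, Finset.sum_insert ha]
    have hS : 0 ≤ ∑ i ∈ s, w i := Finset.sum_nonneg fun i _ => hw i
    have hwa := hw a
    nlinarith [ih, sq_nonneg (w a)]

lemma hasCopy_F5_of (G : HyperGraph) {x1 x2 x3 x4 x5 : ℕ}
    (h12 : x1 ≠ x2) (h13 : x1 ≠ x3) (h14 : x1 ≠ x4) (h15 : x1 ≠ x5)
    (h23 : x2 ≠ x3) (h24 : x2 ≠ x4) (h25 : x2 ≠ x5)
    (h34 : x3 ≠ x4) (h35 : x3 ≠ x5) (h45 : x4 ≠ x5)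
    (e1 : ({x1, x2, x3} : Finset ℕ) ∈ G.edges)
    (e2 : ({x1, x2, x4} : Finset ℕ) ∈ G.edges)
    (e3 : ({x3, x4, x5} : Finset ℕ) ∈ G.edges) : G.HasCopy F5 := by
  classical
  set g : ℕ → ℕ := fun n =>
    if n = 1 then x1 else if n = 2 then x2 else if n = 3 then x3 else
      if n = 4 then x4 else x5 with hg
  have hg1 : g 1 = x1 := by norm_num [hg]
  have hg2 : g 2 = x2 := by norm_num [hg]
  have hg3 : g 3 = x3 := by norm_num [hg]
  have hg4 : g 4 = x4 := by norm_num [hg]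
  have hg5 : g 5 = x5 := by norm_num [hg]
  have hsub1 := G.edge_sub _ e1
  have hsub2 := G.edge_sub _ e2
  have hsub3 := G.edge_sub _ e3
  have hx1 : x1 ∈ G.verts := hsub1 (by simp)
  have hx2 : x2 ∈ G.verts := hsub1 (by simp)
  have hx3 : x3 ∈ G.verts := hsub1 (by simp)
  have hx4 : x4 ∈ G.verts := hsub2 (by simp)
  have hx5 : x5 ∈ G.verts := hsub3 (by simp)
  refine ⟨g, ?_, ?_, ?_⟩
  · intro a ha b hb hab
    have ha' : a = 1 ∨ a = 2 ∨ a = 3 ∨ a = 4 ∨ a = 5 := by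
      simpa [F5] using ha
    have hb' : b = 1 ∨ b = 2 ∨ b = 3 ∨ b = 4 ∨ b = 5 := by
      simpa [F5] using hb
    rcases ha' with rfl|rfl|rfl|rfl|rfl <;> rcases hb' with rfl|rfl|rfl|rfl|rfl <;>
      simp only [hg1, hg2, hg3, hg4, hg5] at hab <;>
      first
        | rfl
        | exact absurd hab h12 | exact absurd hab.symm h12
        | exact absurd hab h13 | exact absurd hab.symm h13
        | exact absurd hab h14 | exact absurd hab.symm h14
        | exact absurd hab h15 | exact absurd hab.symm h15
        | exact absurd hab h23 | exact absurd hab.symm h23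
        | exact absurd hab h24 | exact absurd hab.symm h24
        | exact absurd hab h25 | exact absurd hab.symm h25
        | exact absurd hab h34 | exact absurd hab.symm h34
        | exact absurd hab h35 | exact absurd hab.symm h35
        | exact absurd hab h45 | exact absurd hab.symm h45
  · intro v hv
    have hv' : v = 1 ∨ v = 2 ∨ v = 3 ∨ v = 4 ∨ v = 5 := by
      simpa [F5] using hv
    rcases hv' with rfl|rfl|rfl|rfl|rfl <;>
      simp only [hg1, hg2, hg3, hg4, hg5] <;> assumption
  · intro e he
    have he' : e = ({1,2,3} : Finset ℕ) ∨ e = ({1,2,4} : Finset ℕ) ∨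
        e = ({3,4,5} : Finset ℕ) := by
      simpa [F5] using he
    rcases he' with rfl|rfl|rfl
    · have : Finset.image g {1,2,3} = ({x1,x2,x3} : Finset ℕ) := by
        rw [Finset.image_insert, Finset.image_insert, Finset.image_singleton, hg1, hg2, hg3]
      rw [this]; exact e1
    · have : Finset.image g {1,2,4} = ({x1,x2,x4} : Finset ℕ) := by
        rw [Finset.image_insert, Finset.image_insert, Finset.image_singleton, hg1, hg2, hg4]
      rw [this]; exact e2
    · have : Finset.image g {3,4,5} = ({x3,x4,x5} : Finset ℕ) := by
        rw [Finset.image_insert, Finset.image_insert, Finset.image_singleton, hg3, hg4, hg5]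
      rw [this]; exact e3

end F5Aux
set_option maxHeartbeats 2000000 in
/-- a dense `F_5`-free 3-graph containing a copy of `K_4^3` has
`λ(G) ≤ 1/16`. -/
theorem dense_F5_free_with_K4 (G : HyperGraph) (h3 : G.IsUniform 3) (hd : G.IsDense)
    (hfree : G.Free F5) (hK4 : G.HasCopy (completeHyperGraph 4 3)) :
    G.lagrangian ≤ 1 / 16 := by
  classical
  obtain ⟨f, hfinj, hfv, hfe⟩ := hK4
  have hfvmem : ∀ i ∈ Finset.Icc 1 4, f i ∈ G.verts := fun i hi => hfv i hi
  have hfne : ∀ i ∈ Finset.Icc 1 4, ∀ j ∈ Finset.Icc 1 4, i ≠ j → f i ≠ f j := by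
    intro i hi j hj hij h
    exact hij (hfinj (by exact_mod_cast hi) (by exact_mod_cast hj) h)
  have hK4edge : ∀ i ∈ Finset.Icc 1 4, ∀ j ∈ Finset.Icc 1 4, ∀ k ∈ Finset.Icc 1 4,
      i ≠ j → i ≠ k → j ≠ k → ({f i, f j, f k} : Finset ℕ) ∈ G.edges := by
    intro i hi j hj k hk hij hik hjk
    have hmem : ({i, j, k} : Finset ℕ) ∈ (Finset.Icc 1 4).powersetCard 3 := by
      rw [Finset.mem_powersetCard]
      constructor
      · intro x hx
        simp only [Finset.mem_insert, Finset.mem_singleton] at hx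
        rcases hx with rfl | rfl | rfl <;> assumption
      · rw [Finset.card_insert_of_notMem (by simp [hij, hik]),
          Finset.card_insert_of_notMem (by simp [hjk]), Finset.card_singleton]
    have h := hfe _ hmem
    rwa [Finset.image_insert, Finset.image_insert, Finset.image_singleton] at h
  set A : Finset ℕ := (Finset.Icc 1 4).image f with hA
  have hmemA : ∀ i ∈ Finset.Icc 1 4, f i ∈ A := fun i hi => Finset.mem_image_of_mem f hi
  have hAsub : A ⊆ G.verts := by
    intro x hx
    obtain ⟨i, hi, rfl⟩ := Finset.mem_image.1 hx
    exact hfvmem i hi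
  have hfinj' : Set.InjOn f ↑(Finset.Icc 1 4) := hfinj
  have hAcard : A.card = 4 := by
    rw [hA, Finset.card_image_of_injOn hfinj']
    decide
  -- an auxiliary: pick two elements outside {i,j}
  have hpick : ∀ i ∈ Finset.Icc 1 4, ∀ j ∈ Finset.Icc 1 4, i ≠ j →
      ∃ k ∈ Finset.Icc 1 4, ∃ l ∈ Finset.Icc 1 4, k ≠ l ∧ k ≠ i ∧ k ≠ j ∧ l ≠ i ∧ l ≠ j := by
    intro i hi j hj hij
    have hsub : ({i, j} : Finset ℕ) ⊆ Finset.Icc 1 4 := by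
      intro x hx
      simp only [Finset.mem_insert, Finset.mem_singleton] at hx
      rcases hx with rfl | rfl <;> assumption
    have hcard2 : ((Finset.Icc 1 4) \ {i, j}).card = 2 := by
      rw [Finset.card_sdiff_of_subset hsub, Finset.card_insert_of_notMem (by simp [hij]),
        Finset.card_singleton]
      decide
    obtain ⟨k, hk, l, hl, hkl⟩ := Finset.one_lt_card.1 (by rw [hcard2]; norm_num)
    obtain ⟨hkI, hkn⟩ := Finset.mem_sdiff.1 hk
    obtain ⟨hlI, hln⟩ := Finset.mem_sdiff.1 hl
    simp only [Finset.mem_insert, Finset.mem_singleton, not_or] at hkn hln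
    exact ⟨k, hkI, l, hlI, hkl, hkn.1, hkn.2, hln.1, hln.2⟩
  -- Rule 1: an edge containing two distinct vertices of A is contained in A.
  have hrule1 : ∀ e ∈ G.edges, ∀ i ∈ Finset.Icc 1 4, ∀ j ∈ Finset.Icc 1 4,
      i ≠ j → f i ∈ e → f j ∈ e → e ⊆ A := by
    intro e he i hi j hj hij hfi hfj
    by_contra hsub
    obtain ⟨b, hbe, hbA⟩ := Finset.not_subset.1 hsub
    obtain ⟨k, hk, l, hl, hkl, hki, hkj, hli, hlj⟩ := hpick i hi j hj hij
    have hbfi : b ≠ f i := fun h => hbA (h ▸ hmemA i hi)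
    have hbfj : b ≠ f j := fun h => hbA (h ▸ hmemA j hj)
    have hfij : f i ≠ f j := hfne i hi j hj hij
    have he3 : e = {f i, f j, b} := by
      refine (Finset.eq_of_subset_of_card_le ?_ ?_).symm
      · intro x hx
        simp only [Finset.mem_insert, Finset.mem_singleton] at hx
        rcases hx with rfl | rfl | rfl <;> assumption
      · rw [h3 e he, Finset.card_insert_of_notMem (by simp [hfij, Ne.symm hbfi]),
          Finset.card_insert_of_notMem (by simp [Ne.symm hbfj]), Finset.card_singleton]
    refine hfree (F5Aux.hasCopy_F5_of G (x1 := f k) (x2 := f l) (x3 := f i) (x4 := f j)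
      (x5 := b)
      (hfne k hk l hl hkl) (hfne k hk i hi hki) (hfne k hk j hj hkj)
      (fun h => hbA (by rw [← h]; exact hmemA k hk))
      (hfne l hl i hi hli) (hfne l hl j hj hlj)
      (fun h => hbA (by rw [← h]; exact hmemA l hl))
      hfij (Ne.symm hbfi) (Ne.symm hbfj)
      (hK4edge k hk l hl i hi hkl hki hli)
      (hK4edge k hk l hl j hj hkl hkj hlj)
      (by rw [← he3]; exact he))
  -- Rule 2: a pair outside A extends to at most one vertex of A.
  have hrule2 : ∀ b c : ℕ, b ∉ A → c ∉ A → b ≠ c →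
      ∀ i ∈ Finset.Icc 1 4, ∀ j ∈ Finset.Icc 1 4, i ≠ j →
      ({f i, b, c} : Finset ℕ) ∈ G.edges → ({f j, b, c} : Finset ℕ) ∈ G.edges → False := by
    intro b c hb hc hbc i hi j hj hij h1 h2
    obtain ⟨k, hk, l, hl, hkl, hki, hkj, hli, hlj⟩ := hpick i hi j hj hij
    have hperm1 : ({f i, b, c} : Finset ℕ) = {b, c, f i} := by
      rw [Finset.insert_comm, Finset.pair_comm (f i) c]
    have hperm2 : ({f j, b, c} : Finset ℕ) = {b, c, f j} := by
      rw [Finset.insert_comm, Finset.pair_comm (f j) c]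
    have hcopy : G.HasCopy F5 := by
      apply F5Aux.hasCopy_F5_of G (x1 := b) (x2 := c) (x3 := f i) (x4 := f j) (x5 := f k)
      · exact hbc
      · exact fun h => hb (by rw [h]; exact hmemA i hi)
      · exact fun h => hb (by rw [h]; exact hmemA j hj)
      · exact fun h => hb (by rw [h]; exact hmemA k hk)
      · exact fun h => hc (by rw [h]; exact hmemA i hi)
      · exact fun h => hc (by rw [h]; exact hmemA j hj)
      · exact fun h => hc (by rw [h]; exact hmemA k hk)
      · exact hfne i hi j hj hij
      · exact hfne i hi k hk (Ne.symm hki)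
      · exact hfne j hj k hk (Ne.symm hkj)
      · rw [← hperm1]; exact h1
      · rw [← hperm2]; exact h2
      · exact hK4edge i hi j hj k hk hij (Ne.symm hki) (Ne.symm hkj)
    exact hfree hcopy
  -- permutation form of A
  have hAperm : ∀ p ∈ Finset.Icc 1 4, ∀ q ∈ Finset.Icc 1 4, ∀ r ∈ Finset.Icc 1 4,
      ∀ s ∈ Finset.Icc 1 4, p ≠ q → p ≠ r → p ≠ s → q ≠ r → q ≠ s → r ≠ s →
      A = {f p, f q, f r, f s} := by
    intro p hp q hq r hr s hs hpq hpr hps hqr hqs hrs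
    have hset : ({p, q, r, s} : Finset ℕ) = Finset.Icc 1 4 := by
      apply Finset.eq_of_subset_of_card_le
      · intro x hx
        simp only [Finset.mem_insert, Finset.mem_singleton] at hx
        rcases hx with rfl | rfl | rfl | rfl <;> assumption
      · rw [Finset.card_insert_of_notMem (by simp [hpq, hpr, hps]),
          Finset.card_insert_of_notMem (by simp [hqr, hqs]),
          Finset.card_insert_of_notMem (by simp [hrs]), Finset.card_singleton]
        decide
    rw [hA, ← hset, Finset.image_insert, Finset.image_insert, Finset.image_insert,
      Finset.image_singleton]
  -- the optimal weighting
  have h1I : (1 : ℕ) ∈ Finset.Icc 1 4 := by decide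
  have h2I : (2 : ℕ) ∈ Finset.Icc 1 4 := by decide
  have h3I : (3 : ℕ) ∈ Finset.Icc 1 4 := by decide
  have h4I : (4 : ℕ) ∈ Finset.Icc 1 4 := by decide
  have hVne : G.verts.Nonempty := ⟨f 1, hfvmem 1 h1I⟩
  obtain ⟨w, hwK, hwW, hopt, hmax⟩ := F5Aux.exists_opt hVne
  have hwnn : ∀ i, 0 ≤ w i := hwW.1
  have hpos : ∀ v ∈ G.verts, 0 < w v := fun v hv => F5Aux.pos_of_opt hd hwW hopt hv
  have hDeq : ∀ u ∈ G.verts, ∀ v ∈ G.verts, F5Aux.Dp G w u = F5Aux.Dp G w v := by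
    intro u hu v hv
    by_cases huv : u = v
    · rw [huv]
    · exact le_antisymm (F5Aux.Dp_le hmax hwK huv hu hv (hpos v hv) hwnn)
        (F5Aux.Dp_le hmax hwK (Ne.symm huv) hv hu (hpos u hu) hwnn)
  have hD3 : ∀ u ∈ G.verts, F5Aux.Dp G w u = 3 * G.lagrangianAt w := by
    intro u hu
    have h1 := F5Aux.euler h3 w
    have h2 : ∑ v ∈ G.verts, w v * F5Aux.Dp G w v = ∑ v ∈ G.verts, w v * F5Aux.Dp G w u :=
      Finset.sum_congr rfl fun v hv => by rw [hDeq v hv u hu]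
    rw [h2, ← Finset.sum_mul, hwW.2, one_mul] at h1
    exact h1
  -- split the partial derivative at f i
  have hsplit : ∀ i, F5Aux.Dp G w (f i) =
      (∑ e ∈ (G.edges.filter (fun e => f i ∈ e)).filter (fun e => e ⊆ A),
        ∏ x ∈ e.erase (f i), w x)
      + ∑ e ∈ (G.edges.filter (fun e => f i ∈ e)).filter (fun e => ¬ e ⊆ A),
        ∏ x ∈ e.erase (f i), w x := by
    intro i
    exact (Finset.sum_filter_add_sum_filter_not _ (fun e => e ⊆ A) _).symm
  -- bound on the A-part
  have hApart : ∀ i ∈ Finset.Icc 1 4, ∀ j ∈ Finset.Icc 1 4, ∀ k ∈ Finset.Icc 1 4,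
      ∀ l ∈ Finset.Icc 1 4, i ≠ j → i ≠ k → i ≠ l → j ≠ k → j ≠ l → k ≠ l →
      ∑ e ∈ (G.edges.filter (fun e => f i ∈ e)).filter (fun e => e ⊆ A),
        ∏ x ∈ e.erase (f i), w x
      ≤ w (f j) * w (f k) + w (f j) * w (f l) + w (f k) * w (f l) := by
    intro i hi j hj k hk l hl hij hik hil hjk hjl hkl
    have hij' := hfne i hi j hj hij
    have hik' := hfne i hi k hk hik
    have hil' := hfne i hi l hl hil
    have hjk' := hfne j hj k hk hjk
    have hjl' := hfne j hj l hl hjl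
    have hkl' := hfne k hk l hl hkl
    have hsub : (G.edges.filter (fun e => f i ∈ e)).filter (fun e => e ⊆ A)
        ⊆ ({ {f i, f j, f k}, {f i, f j, f l}, {f i, f k, f l} } : Finset (Finset ℕ)) := by
      intro e he
      obtain ⟨he1, heA⟩ := Finset.mem_filter.1 he
      obtain ⟨heE, hefi⟩ := Finset.mem_filter.1 he1
      have hecard := h3 e heE
      have hAe : ∃ x ∈ A, x ∉ e := by
        by_contra hcon
        push_neg at hcon
        have hc := Finset.card_le_card hcon
        omega
      obtain ⟨x, hxA, hxe⟩ := hAe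
      have hxfi : x ≠ f i := fun h => hxe (h ▸ hefi)
      have hxA' : x = f j ∨ x = f k ∨ x = f l := by
        rw [hAperm i hi j hj k hk l hl hij hik hil hjk hjl hkl] at hxA
        simp only [Finset.mem_insert, Finset.mem_singleton] at hxA
        tauto
      have hkey : ∀ y : ℕ, x = y → e ⊆ A.erase y → (A.erase y).card = 3 → e = A.erase y := by
        intro y hxy hsuby hcy
        exact Finset.eq_of_subset_of_card_le hsuby (by omega)
      simp only [Finset.mem_insert, Finset.mem_singleton]
      rcases hxA' with rfl | rfl | rfl
      · -- x = f j missing, e = {f i, f k, f l}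
        have hAe2 : A = insert (f j) ({f i, f k, f l} : Finset ℕ) :=
          hAperm j hj i hi k hk l hl (Ne.symm hij) hjk hjl hik hil hkl
        have her : A.erase (f j) = ({f i, f k, f l} : Finset ℕ) := by
          rw [hAe2]
          exact Finset.erase_insert (by simp [Ne.symm hij', hjk', hjl'])
        have hee : e = A.erase (f j) := by
          refine hkey (f j) rfl ?_ ?_
          · intro z hz
            exact Finset.mem_erase.2 ⟨fun h => hxe (h ▸ hz), heA hz⟩
          · rw [Finset.card_erase_of_mem (hmemA j hj), hAcard]
        right; right
        rw [hee, her]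
      · have hAe2 : A = insert (f k) ({f i, f j, f l} : Finset ℕ) :=
          hAperm k hk i hi j hj l hl (Ne.symm hik) (Ne.symm hjk) hkl hij hil hjl
        have her : A.erase (f k) = ({f i, f j, f l} : Finset ℕ) := by
          rw [hAe2]
          exact Finset.erase_insert (by simp [Ne.symm hik', Ne.symm hjk', hkl'])
        have hee : e = A.erase (f k) := by
          refine hkey (f k) rfl ?_ ?_
          · intro z hz
            exact Finset.mem_erase.2 ⟨fun h => hxe (h ▸ hz), heA hz⟩
          · rw [Finset.card_erase_of_mem (hmemA k hk), hAcard]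
        right; left
        rw [hee, her]
      · have hAe2 : A = insert (f l) ({f i, f j, f k} : Finset ℕ) :=
          hAperm l hl i hi j hj k hk (Ne.symm hil) (Ne.symm hjl) (Ne.symm hkl) hij hik hjk
        have her : A.erase (f l) = ({f i, f j, f k} : Finset ℕ) := by
          rw [hAe2]
          exact Finset.erase_insert (by simp [Ne.symm hil', Ne.symm hjl', Ne.symm hkl'])
        have hee : e = A.erase (f l) := by
          refine hkey (f l) rfl ?_ ?_
          · intro z hz
            exact Finset.mem_erase.2 ⟨fun h => hxe (h ▸ hz), heA hz⟩
          · rw [Finset.card_erase_of_mem (hmemA l hl), hAcard]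
        left
        rw [hee, her]
    calc ∑ e ∈ (G.edges.filter (fun e => f i ∈ e)).filter (fun e => e ⊆ A),
          ∏ x ∈ e.erase (f i), w x
        ≤ ∑ e ∈ ({ {f i, f j, f k}, {f i, f j, f l}, {f i, f k, f l} } : Finset (Finset ℕ)),
          ∏ x ∈ e.erase (f i), w x := by
          refine Finset.sum_le_sum_of_subset_of_nonneg hsub fun e _ _ =>
            Finset.prod_nonneg fun x _ => hwnn x
      _ = w (f j) * w (f k) + w (f j) * w (f l) + w (f k) * w (f l) := by
          have hne1 : ({f i, f j, f k} : Finset ℕ) ≠ {f i, f j, f l} := by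
            intro h
            have : f k ∈ ({f i, f j, f l} : Finset ℕ) := h ▸ (by simp)
            simp only [Finset.mem_insert, Finset.mem_singleton] at this
            rcases this with h' | h' | h'
            exacts [hik' h'.symm, hjk' h'.symm, hkl' h']
          have hne2 : ({f i, f j, f k} : Finset ℕ) ≠ {f i, f k, f l} := by
            intro h
            have : f j ∈ ({f i, f k, f l} : Finset ℕ) := h ▸ (by simp)
            simp only [Finset.mem_insert, Finset.mem_singleton] at this
            rcases this with h' | h' | h'
            exacts [hij' h'.symm, hjk' h', hjl' h']
          have hne3 : ({f i, f j, f l} : Finset ℕ) ≠ {f i, f k, f l} := by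
            intro h
            have : f j ∈ ({f i, f k, f l} : Finset ℕ) := h ▸ (by simp)
            simp only [Finset.mem_insert, Finset.mem_singleton] at this
            rcases this with h' | h' | h'
            exacts [hij' h'.symm, hjk' h', hjl' h']
          rw [Finset.sum_insert (by simp [hne1, hne2]),
            Finset.sum_insert (by simp [hne3]), Finset.sum_singleton]
          have e1 : (({f i, f j, f k} : Finset ℕ)).erase (f i) = {f j, f k} :=
            Finset.erase_insert (by simp [hij', hik'])
          have e2 : (({f i, f j, f l} : Finset ℕ)).erase (f i) = {f j, f l} :=
            Finset.erase_insert (by simp [hij', hil'])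
          have e3 : (({f i, f k, f l} : Finset ℕ)).erase (f i) = {f k, f l} :=
            Finset.erase_insert (by simp [hik', hil'])
          rw [e1, e2, e3, Finset.prod_insert (by simp [hjk']),
            Finset.prod_insert (by simp [hjl']), Finset.prod_insert (by simp [hkl'])]
          simp only [Finset.prod_singleton]
          ring
  -- the set B outside A
  set B : Finset ℕ := G.verts \ A with hB
  have hBnotA : ∀ x ∈ B, x ∉ A := fun x hx => (Finset.mem_sdiff.1 hx).2
  have himg_eq : ∀ i : ℕ,
      ∑ e ∈ (G.edges.filter (fun e => f i ∈ e)).filter (fun e => ¬ e ⊆ A),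
        ∏ x ∈ e.erase (f i), w x
      = ∑ p ∈ ((G.edges.filter (fun e => f i ∈ e)).filter (fun e => ¬ e ⊆ A)).image
          (fun e => e.erase (f i)), ∏ x ∈ p, w x := by
    intro i
    have hinj : ∀ e1 ∈ (G.edges.filter (fun e => f i ∈ e)).filter (fun e => ¬ e ⊆ A),
        ∀ e2 ∈ (G.edges.filter (fun e => f i ∈ e)).filter (fun e => ¬ e ⊆ A),
        e1.erase (f i) = e2.erase (f i) → e1 = e2 := by
      intro e1 he1 e2 he2 h12
      have hg1 : f i ∈ e1 := (Finset.mem_filter.1 (Finset.mem_filter.1 he1).1).2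
      have hg2 : f i ∈ e2 := (Finset.mem_filter.1 (Finset.mem_filter.1 he2).1).2
      rw [← Finset.insert_erase hg1, ← Finset.insert_erase hg2, h12]
    exact (Finset.sum_image (f := fun p => ∏ x ∈ p, w x) hinj).symm
  have himg_sub : ∀ i ∈ Finset.Icc 1 4,
      ((G.edges.filter (fun e => f i ∈ e)).filter (fun e => ¬ e ⊆ A)).image
        (fun e => e.erase (f i)) ⊆ B.powersetCard 2 := by
    intro i hi p hp
    obtain ⟨e, he, rfl⟩ := Finset.mem_image.1 hp
    obtain ⟨he1, heA⟩ := Finset.mem_filter.1 he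
    obtain ⟨heE, hefi⟩ := Finset.mem_filter.1 he1
    rw [Finset.mem_powersetCard]
    constructor
    · intro x hx
      obtain ⟨hxfi, hxe⟩ := Finset.mem_erase.1 hx
      rw [hB, Finset.mem_sdiff]
      refine ⟨G.edge_sub e heE hxe, fun hxA => ?_⟩
      obtain ⟨m, hm, hfmx⟩ := Finset.mem_image.1 hxA
      have hmi : i ≠ m := by
        rintro rfl
        exact hxfi hfmx.symm
      exact heA (hrule1 e heE i hi m hm hmi hefi (by rw [hfmx]; exact hxe))
    · rw [Finset.card_erase_of_mem hefi, h3 e heE]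
  have himg_disj : ∀ i ∈ Finset.Icc 1 4, ∀ j ∈ Finset.Icc 1 4, i ≠ j →
      Disjoint (((G.edges.filter (fun e => f i ∈ e)).filter (fun e => ¬ e ⊆ A)).image
          (fun e => e.erase (f i)))
        (((G.edges.filter (fun e => f j ∈ e)).filter (fun e => ¬ e ⊆ A)).image
          (fun e => e.erase (f j))) := by
    intro i hi j hj hij
    rw [Finset.disjoint_left]
    intro p hpi hpj
    have hpP := himg_sub i hi hpi
    obtain ⟨hpB, hp2⟩ := Finset.mem_powersetCard.1 hpP
    obtain ⟨b, c, hbc, hpbc⟩ := Finset.card_eq_two.1 hp2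
    subst hpbc
    obtain ⟨e, he, hpe⟩ := Finset.mem_image.1 hpi
    obtain ⟨e', he', hpe'⟩ := Finset.mem_image.1 hpj
    obtain ⟨he1, _⟩ := Finset.mem_filter.1 he
    obtain ⟨heE, hefi⟩ := Finset.mem_filter.1 he1
    obtain ⟨he1', _⟩ := Finset.mem_filter.1 he'
    obtain ⟨heE', hefj⟩ := Finset.mem_filter.1 he1'
    have hee : e = ({f i, b, c} : Finset ℕ) := by
      rw [← Finset.insert_erase hefi, hpe]
    have hee' : e' = ({f j, b, c} : Finset ℕ) := by
      rw [← Finset.insert_erase hefj, hpe']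
    exact hrule2 b c (hBnotA b (hpB (by simp))) (hBnotA c (hpB (by simp))) hbc i hi j hj hij
      (by rw [← hee]; exact heE) (by rw [← hee']; exact heE')
  have hsum4 : ∑ p ∈ ((G.edges.filter (fun e => f 1 ∈ e)).filter (fun e => ¬ e ⊆ A)).image
        (fun e => e.erase (f 1)), ∏ x ∈ p, w x
      + ∑ p ∈ ((G.edges.filter (fun e => f 2 ∈ e)).filter (fun e => ¬ e ⊆ A)).image
        (fun e => e.erase (f 2)), ∏ x ∈ p, w x
      + ∑ p ∈ ((G.edges.filter (fun e => f 3 ∈ e)).filter (fun e => ¬ e ⊆ A)).image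
        (fun e => e.erase (f 3)), ∏ x ∈ p, w x
      + ∑ p ∈ ((G.edges.filter (fun e => f 4 ∈ e)).filter (fun e => ¬ e ⊆ A)).image
        (fun e => e.erase (f 4)), ∏ x ∈ p, w x
      ≤ ∑ p ∈ B.powersetCard 2, ∏ x ∈ p, w x := by
    have d34 := himg_disj 3 h3I 4 h4I (by norm_num)
    have d234 : Disjoint (((G.edges.filter (fun e => f 2 ∈ e)).filter (fun e => ¬ e ⊆ A)).image
        (fun e => e.erase (f 2)))
        ((((G.edges.filter (fun e => f 3 ∈ e)).filter (fun e => ¬ e ⊆ A)).image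
          (fun e => e.erase (f 3)))
        ∪ (((G.edges.filter (fun e => f 4 ∈ e)).filter (fun e => ¬ e ⊆ A)).image
          (fun e => e.erase (f 4)))) := by
      rw [Finset.disjoint_union_right]
      exact ⟨himg_disj 2 h2I 3 h3I (by norm_num), himg_disj 2 h2I 4 h4I (by norm_num)⟩
    have d1234 : Disjoint (((G.edges.filter (fun e => f 1 ∈ e)).filter (fun e => ¬ e ⊆ A)).image
        (fun e => e.erase (f 1)))
        ((((G.edges.filter (fun e => f 2 ∈ e)).filter (fun e => ¬ e ⊆ A)).image
          (fun e => e.erase (f 2)))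
        ∪ ((((G.edges.filter (fun e => f 3 ∈ e)).filter (fun e => ¬ e ⊆ A)).image
          (fun e => e.erase (f 3)))
        ∪ (((G.edges.filter (fun e => f 4 ∈ e)).filter (fun e => ¬ e ⊆ A)).image
          (fun e => e.erase (f 4))))) := by
      rw [Finset.disjoint_union_right, Finset.disjoint_union_right]
      exact ⟨himg_disj 1 h1I 2 h2I (by norm_num),
        himg_disj 1 h1I 3 h3I (by norm_num), himg_disj 1 h1I 4 h4I (by norm_num)⟩
    rw [add_assoc, add_assoc, ← Finset.sum_union d34, ← Finset.sum_union d234,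
      ← Finset.sum_union d1234]
    refine Finset.sum_le_sum_of_subset_of_nonneg ?_
      (fun p _ _ => Finset.prod_nonneg fun x _ => hwnn x)
    exact Finset.union_subset (himg_sub 1 h1I) (Finset.union_subset (himg_sub 2 h2I)
      (Finset.union_subset (himg_sub 3 h3I) (himg_sub 4 h4I)))
  -- assemble
  have hD1 := hD3 (f 1) (hfvmem 1 h1I)
  have hD2 := hD3 (f 2) (hfvmem 2 h2I)
  have hD3' := hD3 (f 3) (hfvmem 3 h3I)
  have hD4 := hD3 (f 4) (hfvmem 4 h4I)
  have hb1 := hApart 1 h1I 2 h2I 3 h3I 4 h4I (by norm_num) (by norm_num) (by norm_num)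
    (by norm_num) (by norm_num) (by norm_num)
  have hb2 := hApart 2 h2I 1 h1I 3 h3I 4 h4I (by norm_num) (by norm_num) (by norm_num)
    (by norm_num) (by norm_num) (by norm_num)
  have hb3 := hApart 3 h3I 1 h1I 2 h2I 4 h4I (by norm_num) (by norm_num) (by norm_num)
    (by norm_num) (by norm_num) (by norm_num)
  have hb4 := hApart 4 h4I 1 h1I 2 h2I 3 h3I (by norm_num) (by norm_num) (by norm_num)
    (by norm_num) (by norm_num) (by norm_num)
  have hs1 := hsplit 1
  have hs2 := hsplit 2
  have hs3 := hsplit 3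
  have hs4 := hsplit 4
  rw [himg_eq 1] at hs1
  rw [himg_eq 2] at hs2
  rw [himg_eq 3] at hs3
  rw [himg_eq 4] at hs4
  rw [hD1] at hs1
  rw [hD2] at hs2
  rw [hD3'] at hs3
  rw [hD4] at hs4
  have hPair := F5Aux.sum_pairs_le hwnn B
  set β : ℝ := ∑ x ∈ B, w x with hβ
  have hβ0 : 0 ≤ β := Finset.sum_nonneg fun x _ => hwnn x
  have hf12 : f 1 ≠ f 2 := hfne 1 h1I 2 h2I (by norm_num)
  have hf13 : f 1 ≠ f 3 := hfne 1 h1I 3 h3I (by norm_num)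
  have hf14 : f 1 ≠ f 4 := hfne 1 h1I 4 h4I (by norm_num)
  have hf23 : f 2 ≠ f 3 := hfne 2 h2I 3 h3I (by norm_num)
  have hf24 : f 2 ≠ f 4 := hfne 2 h2I 4 h4I (by norm_num)
  have hf34 : f 3 ≠ f 4 := hfne 3 h3I 4 h4I (by norm_num)
  have hAsum : ∑ x ∈ A, w x = w (f 1) + w (f 2) + w (f 3) + w (f 4) := by
    rw [hAperm 1 h1I 2 h2I 3 h3I 4 h4I (by norm_num) (by norm_num) (by norm_num)
      (by norm_num) (by norm_num) (by norm_num)]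
    rw [Finset.sum_insert (by simp [hf12, hf13, hf14]),
      Finset.sum_insert (by simp [hf23, hf24]),
      Finset.sum_insert (by simp [hf34]), Finset.sum_singleton]
    ring
  have htotal : β + (w (f 1) + w (f 2) + w (f 3) + w (f 4)) = 1 := by
    rw [← hAsum, hβ, hB]
    exact (Finset.sum_sdiff hAsub).trans hwW.2
  have hα1 := hwnn (f 1)
  have hα2 := hwnn (f 2)
  have hα3 := hwnn (f 3)
  have hα4 := hwnn (f 4)
  have hβ1 : β ≤ 1 := by linarith
  have h65 : (0:ℝ) ≤ β * (6 - 5 * β) := mul_nonneg hβ0 (by linarith)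
  rw [hopt]
  nlinarith [sq_nonneg (w (f 1) - w (f 2)), sq_nonneg (w (f 1) - w (f 3)),
    sq_nonneg (w (f 1) - w (f 4)), sq_nonneg (w (f 2) - w (f 3)),
    sq_nonneg (w (f 2) - w (f 4)), sq_nonneg (w (f 3) - w (f 4)),
    h65, hb1, hb2, hb3, hb4, hs1, hs2, hs3, hs4, hsum4, hPair]
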